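/- If X and Y are independent with X ∼ DB_λ(α₁,θ) and Y ∼ DB_λ(α₂,θ), then for every k ≥ 0, P{X+Y=k} = e^{-(α₁+α₂)(e_λ(θ)-1)} (θ^k/k!) φ_{k,λ}(α₁+α₂). In particular X+Y ∼ DB_λ(α₁+α₂, θ). -/

import Mathlib

open Real MeasureTheory ProbabilityTheory Filter Asymptotics

/-- The degenerate falling factorial `(x)_{n,l} = x(x-l)(x-2l)...(x-(n-1)l)`. -/
noncomputable def dFall (l x : ℝ) (n : ℕ) : ℝ := ∏ i ∈ Finset.range n, (x - i * l)

/-- The degenerate exponential `e_l^x(t) = (1 + l t)^(x/l)`. -/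
noncomputable def degExp (l x t : ℝ) : ℝ := (1 + l * t) ^ (x / l)

/-- Absolute summability strictly inside a point of convergence. -/
lemma aux_abs_summable {a : ℕ → ℝ} {s t : ℝ} (hs : 0 < s)
    (h : Summable fun n => a n * s ^ n) (ht : |t| < s) :
    Summable fun n => ‖a n * t ^ n‖ := by
  have htend : Filter.Tendsto (fun n => |a n * s ^ n|) Filter.atTop (nhds 0) := by
    simpa using h.tendsto_atTop_zero.abs
  obtain ⟨C, hC⟩ := htend.bddAbove_range
  set q : ℝ := |t| / s with hq
  have hq0 : 0 ≤ q := div_nonneg (abs_nonneg _) hs.le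
  have hq1 : q < 1 := (div_lt_one hs).2 ht
  have hts : |t| = s * q := by rw [hq]; field_simp
  refine Summable.of_nonneg_of_le (fun n => norm_nonneg _) (fun n => ?_)
    ((summable_geometric_of_lt_one hq0 hq1).mul_left C)
  have : ‖a n * t ^ n‖ = |a n * s ^ n| * q ^ n := by
    rw [Real.norm_eq_abs, abs_mul, abs_mul, abs_pow, abs_pow, hts, mul_pow,
      abs_of_pos hs, mul_assoc]
  rw [this]
  have hCn : |a n * s ^ n| ≤ C := hC ⟨n, rfl⟩
  exact mul_le_mul_of_nonneg_right hCn (pow_nonneg hq0 n)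

/-- A power series representation on an interval gives a `HasFPowerSeriesAt`. -/
lemma aux_hasFPowerSeriesAt {a : ℕ → ℝ} {f : ℝ → ℝ} {s : ℝ} (hs : 0 < s)
    (h : ∀ t : ℝ, |t| < s → HasSum (fun n => a n * t ^ n) (f t)) :
    HasFPowerSeriesAt f (FormalMultilinearSeries.ofScalars ℝ a) 0 := by
  have h34 : Summable fun n => a n * (3 * s / 4) ^ n :=
    (h _ (by rw [abs_of_pos (by linarith)]; linarith)).summable
  have hns : Summable fun n => ‖a n * (s / 2) ^ n‖ :=
    aux_abs_summable (by linarith) h34 (by rw [abs_of_pos (by linarith)]; linarith)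
  have hrad : ENNReal.ofReal (s / 2) ≤ (FormalMultilinearSeries.ofScalars ℝ a).radius := by
    rw [ENNReal.ofReal]
    refine FormalMultilinearSeries.le_radius_of_summable_norm _ ?_
    have : ∀ n : ℕ, ‖FormalMultilinearSeries.ofScalars ℝ a n‖ * ((s / 2).toNNReal : ℝ) ^ n
        = ‖a n * (s / 2) ^ n‖ := by
      intro n
      rw [FormalMultilinearSeries.ofScalars_norm, Real.coe_toNNReal _ (by linarith : (0:ℝ) ≤ s / 2),
        norm_mul, norm_pow, Real.norm_of_nonneg (by linarith : (0:ℝ) ≤ s / 2)]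
    simpa only [this] using hns
  refine ⟨ENNReal.ofReal (s / 2), ?_⟩
  refine ⟨hrad, by positivity, ?_⟩
  intro y hy
  have hy' : |y| < s / 2 := by
    rw [EMetric.mem_ball, edist_dist, Real.dist_eq, sub_zero] at hy
    exact (ENNReal.ofReal_lt_ofReal_iff (by linarith)).1 hy
  have hfun : (fun n => (FormalMultilinearSeries.ofScalars ℝ a n) fun _ => y)
      = fun n => a n * y ^ n := by
    funext n
    rw [FormalMultilinearSeries.ofScalars_apply_eq, smul_eq_mul]
  rw [zero_add, hfun]
  exact h y (lt_trans hy' (by linarith))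

/-- Uniqueness of power series coefficients. -/
lemma aux_coeff_unique {a b : ℕ → ℝ} {f : ℝ → ℝ} {s : ℝ} (hs : 0 < s)
    (ha : ∀ t : ℝ, |t| < s → HasSum (fun n => a n * t ^ n) (f t))
    (hb : ∀ t : ℝ, |t| < s → HasSum (fun n => b n * t ^ n) (f t)) : a = b :=
  FormalMultilinearSeries.ofScalars_series_injective ℝ ℝ
    ((aux_hasFPowerSeriesAt hs ha).eq_formalMultilinearSeries (aux_hasFPowerSeriesAt hs hb))

lemma aux_ofReal_sum_le {s : Finset ℕ} {f : ℕ → ℝ} :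
    ENNReal.ofReal (∑ i ∈ s, f i) ≤ ∑ i ∈ s, ENNReal.ofReal (f i) := by
  classical
  induction s using Finset.induction with
  | empty => simp
  | insert _ _ h ih =>
    rw [Finset.sum_insert h, Finset.sum_insert h]
    exact ENNReal.ofReal_add_le.trans (add_le_add le_rfl ih)

/-- Nonnegativity of a claimed pmf. -/
lemma aux_nonneg {Ω : Type*} [MeasurableSpace Ω] (P : Measure Ω) [IsProbabilityMeasure P]
    (X : Ω → ℕ) (hXmeas : Measurable X) (x : ℕ → ℝ) (hsum : HasSum x 1)
    (hX : ∀ k, P {ω | X ω = k} = ENNReal.ofReal (x k)) : ∀ k, 0 ≤ x k := by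
  by_contra hneg
  push_neg at hneg
  obtain ⟨k0, hk0⟩ := hneg
  have hmeas : ∀ k : ℕ, MeasurableSet {ω | X ω = k} := fun k =>
    hXmeas (measurableSet_singleton k)
  have hdisj : Pairwise (Function.onFun Disjoint fun k : ℕ => {ω | X ω = k}) := by
    intro i j hij
    refine Set.disjoint_left.2 fun ω h1 h2 => hij ?_
    simp only [Set.mem_setOf_eq] at h1 h2
    omega
  have hunion : (⋃ k : ℕ, {ω | X ω = k}) = Set.univ := by
    ext ω; simp
  have h1 : ∑' k : ℕ, P {ω | X ω = k} = 1 := by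
    rw [← measure_iUnion hdisj hmeas, hunion, measure_univ]
  have htend : Filter.Tendsto (fun N => ∑ k ∈ Finset.range N, x k) Filter.atTop (nhds 1) :=
    hsum.tendsto_sum_nat
  have hev : ∀ᶠ N in Filter.atTop, 1 + x k0 < ∑ k ∈ Finset.range N, x k :=
    htend.eventually (eventually_gt_nhds (by linarith))
  obtain ⟨N, hN1, hN2⟩ := (hev.and (Filter.eventually_gt_atTop k0)).exists
  set F := (Finset.range N).erase k0 with hF
  have hFsum : 1 < ∑ k ∈ F, x k := by
    have := Finset.sum_erase_add (Finset.range N) x (Finset.mem_range.2 hN2)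
    rw [hF]; linarith
  have hlt : (1 : ENNReal) < ∑ k ∈ F, ENNReal.ofReal (x k) :=
    lt_of_lt_of_le (ENNReal.one_lt_ofReal.2 hFsum) aux_ofReal_sum_le
  have hle : ∑ k ∈ F, ENNReal.ofReal (x k) ≤ 1 := by
    calc ∑ k ∈ F, ENNReal.ofReal (x k) = ∑ k ∈ F, P {ω | X ω = k} := by
          exact Finset.sum_congr rfl fun k _ => (hX k).symm
      _ ≤ ∑' k : ℕ, P {ω | X ω = k} := ENNReal.sum_le_tsum F
      _ = 1 := h1
  exact absurd (hlt.trans_le hle) (lt_irrefl _)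

theorem degenerate_bell_sum_of_two (l α₁ α₂ θ : ℝ) (hl : l ∈ Set.Ioc (0 : ℝ) 1)
    (hα₁ : 0 < α₁) (hα₂ : 0 < α₂) (hθ : 0 < θ)
    (φ : ℕ → ℝ → ℝ)
    (hφ : ∀ x t : ℝ, 0 < 1 + l * t →
      HasSum (fun n : ℕ => φ n x * t ^ n / (n.factorial : ℝ))
        (Real.exp (x * (degExp l 1 t - 1))))
    {Ω : Type*} [MeasurableSpace Ω] (P : Measure Ω) [IsProbabilityMeasure P]
    (X Y : Ω → ℕ) (hXmeas : Measurable X) (hYmeas : Measurable Y)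
    (hindep : IndepFun X Y P)
    (hX : ∀ k : ℕ, P {ω | X ω = k} =
      ENNReal.ofReal (Real.exp (-(α₁ * (degExp l 1 θ - 1))) * θ ^ k * φ k α₁ / (k.factorial : ℝ)))
    (hY : ∀ k : ℕ, P {ω | Y ω = k} =
      ENNReal.ofReal (Real.exp (-(α₂ * (degExp l 1 θ - 1))) * θ ^ k * φ k α₂ / (k.factorial : ℝ))) :
    ∀ k : ℕ, P {ω | X ω + Y ω = k} =
      ENNReal.ofReal (Real.exp (-((α₁ + α₂) * (degExp l 1 θ - 1))) * θ ^ k *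
        φ k (α₁ + α₂) / (k.factorial : ℝ)) := by
  obtain ⟨hl0, hl1⟩ := hl
  set c : ℝ := degExp l 1 θ - 1 with hc
  -- pmf functions
  set x : ℕ → ℝ := fun k => Real.exp (-(α₁ * c)) * θ ^ k * φ k α₁ / (k.factorial : ℝ) with hxdef
  set y : ℕ → ℝ := fun k => Real.exp (-(α₂ * c)) * θ ^ k * φ k α₂ / (k.factorial : ℝ) with hydef
  have hθpos : (0 : ℝ) < 1 + l * θ := by positivity
  -- x, y are nonnegative
  have hsum_of : ∀ α : ℝ, HasSum
      (fun k : ℕ => Real.exp (-(α * c)) * θ ^ k * φ k α / (k.factorial : ℝ)) 1 := by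
    intro α
    have h0 := (hφ α θ hθpos).mul_left (Real.exp (-(α * c)))
    have he : Real.exp (-(α * c)) * Real.exp (α * (degExp l 1 θ - 1)) = 1 := by
      rw [← Real.exp_add, hc]; ring_nf; exact Real.exp_zero
    rw [he] at h0
    have hfun : (fun k : ℕ => Real.exp (-(α * c)) * (φ k α * θ ^ k / (k.factorial : ℝ)))
        = fun k : ℕ => Real.exp (-(α * c)) * θ ^ k * φ k α / (k.factorial : ℝ) := by
      funext k; ring
    rwa [hfun] at h0
  have hxnn : ∀ k, 0 ≤ x k := aux_nonneg P X hXmeas x (hsum_of α₁) hX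
  have hynn : ∀ k, 0 ≤ y k := aux_nonneg P Y hYmeas y (hsum_of α₂) hY
  -- the binomial identity for φ via power series uniqueness
  have hspos : (0 : ℝ) < 1 / l := by positivity
  have hpos : ∀ t : ℝ, |t| < 1 / l → (0 : ℝ) < 1 + l * t := by
    intro t ht
    have h1 := (abs_lt.1 ht).1
    have : l * (-(1 / l)) < l * t := by
      exact mul_lt_mul_of_pos_left h1 hl0
    have h2 : l * (-(1 / l)) = -1 := by field_simp
    linarith
  have hA : ∀ (α t : ℝ), 0 < 1 + l * t →
      HasSum (fun n : ℕ => (φ n α / (n.factorial : ℝ)) * t ^ n)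
        (Real.exp (α * (degExp l 1 t - 1))) := by
    intro α t htpos
    have h0 := hφ α t htpos
    have hfun : (fun n : ℕ => φ n α * t ^ n / (n.factorial : ℝ))
        = fun n : ℕ => (φ n α / (n.factorial : ℝ)) * t ^ n := by
      funext n; ring
    rwa [hfun] at h0
  have hkey : (fun n : ℕ => φ n (α₁ + α₂) / (n.factorial : ℝ))
      = fun n : ℕ => ∑ i ∈ Finset.range (n + 1),
          (φ i α₁ / (i.factorial : ℝ)) * (φ (n - i) α₂ / ((n - i).factorial : ℝ)) := by
    have hAs : (0:ℝ) < 1 + l * (1 / l) := by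
      rw [mul_one_div, div_self hl0.ne']; norm_num
    refine aux_coeff_unique (f := fun t => Real.exp ((α₁ + α₂) * (degExp l 1 t - 1))) hspos
      (fun t ht => hA (α₁ + α₂) t (hpos t ht)) ?_
    intro t ht
    have hnf : Summable fun n : ℕ => ‖(φ n α₁ / (n.factorial : ℝ)) * t ^ n‖ :=
      aux_abs_summable hspos (hA α₁ (1 / l) hAs).summable ht
    have hng : Summable fun n : ℕ => ‖(φ n α₂ / (n.factorial : ℝ)) * t ^ n‖ :=
      aux_abs_summable hspos (hA α₂ (1 / l) hAs).summable ht
    have hcauchy := hasSum_sum_range_mul_of_summable_norm hnf hng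
    rw [(hA α₁ t (hpos t ht)).tsum_eq, (hA α₂ t (hpos t ht)).tsum_eq] at hcauchy
    have hes : Real.exp (α₁ * (degExp l 1 t - 1)) * Real.exp (α₂ * (degExp l 1 t - 1))
        = Real.exp ((α₁ + α₂) * (degExp l 1 t - 1)) := by
      rw [← Real.exp_add]; ring_nf
    rw [hes] at hcauchy
    have hfun : (fun n : ℕ => ∑ k ∈ Finset.range (n + 1),
          ((φ k α₁ / (k.factorial : ℝ)) * t ^ k) *
            ((φ (n - k) α₂ / ((n - k).factorial : ℝ)) * t ^ (n - k)))
        = fun n : ℕ => (∑ i ∈ Finset.range (n + 1),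
            (φ i α₁ / (i.factorial : ℝ)) * (φ (n - i) α₂ / ((n - i).factorial : ℝ))) * t ^ n := by
      funext n
      rw [Finset.sum_mul]
      refine Finset.sum_congr rfl fun i hi => ?_
      have hin : i ≤ n := Nat.lt_succ_iff.1 (Finset.mem_range.1 hi)
      have : t ^ i * t ^ (n - i) = t ^ n := by
        rw [← pow_add, Nat.add_sub_cancel' hin]
      calc (φ i α₁ / (i.factorial : ℝ)) * t ^ i *
            ((φ (n - i) α₂ / ((n - i).factorial : ℝ)) * t ^ (n - i))
          = (φ i α₁ / (i.factorial : ℝ)) * (φ (n - i) α₂ / ((n - i).factorial : ℝ)) *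
              (t ^ i * t ^ (n - i)) := by ring
        _ = _ := by rw [this]
    rwa [hfun] at hcauchy
  -- probability computation
  intro k
  have hsets : {ω | X ω + Y ω = k}
      = ⋃ i ∈ Finset.range (k + 1), ({ω | X ω = i} ∩ {ω | Y ω = k - i}) := by
    ext ω
    simp only [Set.mem_setOf_eq, Set.mem_iUnion, Set.mem_inter_iff, Finset.mem_range,
      exists_prop]
    constructor
    · intro h; exact ⟨X ω, by omega, rfl, by omega⟩
    · rintro ⟨i, hi, h1, h2⟩; omega
  have hmeasXY : ∀ i ∈ Finset.range (k + 1),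
      MeasurableSet ({ω | X ω = i} ∩ {ω | Y ω = k - i}) := fun i _ =>
    (hXmeas (measurableSet_singleton i)).inter (hYmeas (measurableSet_singleton (k - i)))
  have hdisj : (Finset.range (k + 1) : Set ℕ).PairwiseDisjoint
      fun i => {ω | X ω = i} ∩ {ω | Y ω = k - i} := by
    intro i _ j _ hij
    refine Set.disjoint_left.2 fun ω h1 h2 => hij ?_
    obtain ⟨h1a, _⟩ := h1
    obtain ⟨h2a, _⟩ := h2
    simp only [Set.mem_setOf_eq] at h1a h2a
    omega
  rw [hsets, measure_biUnion_finset hdisj hmeasXY]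
  have hterm : ∀ i ∈ Finset.range (k + 1),
      P ({ω | X ω = i} ∩ {ω | Y ω = k - i}) = ENNReal.ofReal (x i * y (k - i)) := by
    intro i _
    have hpre : {ω | X ω = i} ∩ {ω | Y ω = k - i}
        = X ⁻¹' {i} ∩ Y ⁻¹' {k - i} := by
      ext ω; simp [Set.mem_preimage]
    rw [hpre, hindep.measure_inter_preimage_eq_mul {i} {k - i}
      (measurableSet_singleton i) (measurableSet_singleton (k - i))]
    have hXi : X ⁻¹' {i} = {ω | X ω = i} := by ext ω; simp
    have hYi : Y ⁻¹' {k - i} = {ω | Y ω = k - i} := by ext ω; simp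
    rw [hXi, hYi, hX i, hY (k - i), ← ENNReal.ofReal_mul (hxnn i)]
  rw [Finset.sum_congr rfl hterm, ← ENNReal.ofReal_sum_of_nonneg
    (fun i _ => mul_nonneg (hxnn i) (hynn (k - i)))]
  congr 1
  have hxy : ∀ i ∈ Finset.range (k + 1), x i * y (k - i)
      = Real.exp (-((α₁ + α₂) * c)) * θ ^ k *
          ((φ i α₁ / (i.factorial : ℝ)) * (φ (k - i) α₂ / ((k - i).factorial : ℝ))) := by
    intro i hi
    have hik : i ≤ k := Nat.lt_succ_iff.1 (Finset.mem_range.1 hi)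
    have hθk : θ ^ i * θ ^ (k - i) = θ ^ k := by
      rw [← pow_add, Nat.add_sub_cancel' hik]
    have hee : Real.exp (-(α₁ * c)) * Real.exp (-(α₂ * c))
        = Real.exp (-((α₁ + α₂) * c)) := by
      rw [← Real.exp_add]; ring_nf
    rw [hxdef, hydef]
    simp only
    calc Real.exp (-(α₁ * c)) * θ ^ i * φ i α₁ / (i.factorial : ℝ) *
          (Real.exp (-(α₂ * c)) * θ ^ (k - i) * φ (k - i) α₂ / ((k - i).factorial : ℝ))
        = (Real.exp (-(α₁ * c)) * Real.exp (-(α₂ * c))) * (θ ^ i * θ ^ (k - i)) *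
            ((φ i α₁ / (i.factorial : ℝ)) * (φ (k - i) α₂ / ((k - i).factorial : ℝ))) := by
          ring
      _ = _ := by rw [hθk, hee]
  rw [Finset.sum_congr rfl hxy, ← Finset.mul_sum]
  have := congrFun hkey k
  rw [← this]
  ring
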